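/- arXiv:2002.07727 — 3 statements merged into one kernel-verified Lean document; each statement's English description precedes it below -/
import Mathlib

section
/- (Projection/excess lemma) Let π = ⟨q₁,...,q_r⟩ be a path in ℝ^d with endpoints s = q₁, t = q_r, s ≠ t, and let 0 < γ ≤ 1. For each directed edge e = q_{i+1} − q_i, let p(e) be the signed length of the projection of e onto the unit vector u = (t − s)/‖t − s‖, i.e. p(e) = ⟨e, u⟩. Call an edge 'aligned' if the angle between e and u is at most γ. Then the total length of non-aligned edges satisfies Σ_{e non-aligned} ‖e‖ ≤ (24/(11γ²))·E(π), where E(π) = ‖π‖ − ‖t − s‖ is the excess of π. -/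
open scoped RealInnerProductSpace
open Fin.NatCast

private lemma sin_deriv_aux (y : ℝ) :
    HasDerivAt (fun x : ℝ => Real.sin x - x + x ^ 3 / 6)
      (Real.cos y - 1 + y ^ 2 / 2) y := by
  have h := ((Real.hasDerivAt_sin y).sub (hasDerivAt_id y)).add
    ((hasDerivAt_pow 3 y).div_const 6)
  refine h.congr_deriv ?_
  simp
  ring

private lemma sin_ge_sub_cube (x : ℝ) (hx : 0 ≤ x) : x - x ^ 3 / 6 ≤ Real.sin x := by
  have h : Monotone (fun x : ℝ => Real.sin x - x + x ^ 3 / 6) := by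
    apply monotone_of_deriv_nonneg
    · intro y
      exact (sin_deriv_aux y).differentiableAt
    · intro y
      rw [(sin_deriv_aux y).deriv]
      nlinarith [Real.one_sub_sq_div_two_le_cos (x := y)]
  have h0 := h hx
  simp only [Real.sin_zero] at h0
  linarith

private lemma cos_deriv_aux (y : ℝ) :
    HasDerivAt (fun x : ℝ => 1 - x ^ 2 / 2 + x ^ 4 / 24 - Real.cos x)
      (-y + y ^ 3 / 6 + Real.sin y) y := by
  have h := (((hasDerivAt_const y (1:ℝ)).sub ((hasDerivAt_pow 2 y).div_const 2)).add
    ((hasDerivAt_pow 4 y).div_const 24)).sub (Real.hasDerivAt_cos y)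
  refine h.congr_deriv ?_
  simp
  ring

private lemma cos_le_taylor (x : ℝ) (hx : 0 ≤ x) :
    Real.cos x ≤ 1 - x ^ 2 / 2 + x ^ 4 / 24 := by
  have h : MonotoneOn (fun x : ℝ => 1 - x ^ 2 / 2 + x ^ 4 / 24 - Real.cos x)
      (Set.Ici 0) := by
    apply monotoneOn_of_deriv_nonneg (convex_Ici 0)
    · exact (Differentiable.continuous (fun y => (cos_deriv_aux y).differentiableAt)).continuousOn
    · exact fun y _ => (cos_deriv_aux y).differentiableAt.differentiableWithinAt
    · intro y hy
      rw [interior_Ici] at hy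
      rw [(cos_deriv_aux y).deriv]
      have := sin_ge_sub_cube y (le_of_lt hy)
      linarith
  have h0 := h Set.self_mem_Ici (Set.mem_Ici.mpr hx) hx
  simp only [Real.cos_zero] at h0
  norm_num at h0
  linarith

private lemma cos_le_key {γ : ℝ} (hγ0 : 0 < γ) (hγ1 : γ ≤ 1) :
    Real.cos γ ≤ 1 - 11 / 24 * γ ^ 2 := by
  have h1 := cos_le_taylor γ hγ0.le
  have h2 : γ ^ 2 ≤ 1 := by nlinarith
  nlinarith [mul_le_mul_of_nonneg_left h2 (sq_nonneg γ)]

/-- Projection/excess lemma: for a path `q₀,…,q_r` in `ℝ^d` with distinct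
endpoints `s = q₀`, `t = q_r` and `0 < γ ≤ 1`, the total length of edges whose
angle to the direction `u = (t−s)/‖t−s‖` exceeds `γ` is at most
`(24/(11γ²))·(‖π‖ − ‖t − s‖)`. -/
theorem projection_excess (d r : ℕ)
    (q : Fin (r + 1) → EuclideanSpace ℝ (Fin d))
    (hst : q 0 ≠ q (Fin.last r))
    (γ : ℝ) (hγ0 : 0 < γ) (hγ1 : γ ≤ 1) :
    ∑ j ∈ Finset.univ.filter
        (fun j : Fin r =>
          γ < InnerProductGeometry.angle (q j.succ - q j.castSucc)
              (‖q (Fin.last r) - q 0‖⁻¹ • (q (Fin.last r) - q 0))),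
        ‖q j.succ - q j.castSucc‖ ≤
      (24 / (11 * γ ^ 2)) *
        ((∑ j : Fin r, ‖q j.succ - q j.castSucc‖) - ‖q (Fin.last r) - q 0‖) := by
  set v : EuclideanSpace ℝ (Fin d) := q (Fin.last r) - q 0 with hv_def
  have hv : v ≠ 0 := sub_ne_zero.mpr (Ne.symm hst)
  set u : EuclideanSpace ℝ (Fin d) := ‖v‖⁻¹ • v with hu_def
  have hu1 : ‖u‖ = 1 := norm_smul_inv_norm (𝕜 := ℝ) hv
  set e : Fin r → EuclideanSpace ℝ (Fin d) := fun j => q j.succ - q j.castSucc with he_def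
  -- telescoping
  have tele : ∑ j : Fin r, e j = v := by
    calc ∑ j : Fin r, (q j.succ - q j.castSucc)
        = ∑ j : Fin r, (q (((j : ℕ) + 1 : ℕ) : Fin (r + 1)) - q (((j : ℕ) : ℕ) : Fin (r + 1))) := by
          apply Finset.sum_congr rfl
          intro j _
          congr 2
          · ext; simp [Fin.val_natCast, Nat.mod_eq_of_lt (Nat.succ_lt_succ j.isLt)]
          · ext; simp [Fin.val_natCast, Nat.mod_eq_of_lt (Nat.lt_succ_of_lt j.isLt)]
      _ = ∑ i ∈ Finset.range r, (q ((i + 1 : ℕ) : Fin (r + 1)) - q ((i : ℕ) : Fin (r + 1))) :=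
          Fin.sum_univ_eq_sum_range (fun i : ℕ => q ((i + 1 : ℕ) : Fin (r + 1)) - q ((i : ℕ) : Fin (r + 1))) r
      _ = q ((r : ℕ) : Fin (r + 1)) - q ((0 : ℕ) : Fin (r + 1)) :=
          Finset.sum_range_sub (fun i : ℕ => q ((i : ℕ) : Fin (r + 1))) r
      _ = q (Fin.last r) - q 0 := by
          congr 2
          ext; simp [Fin.val_natCast]
  -- total projection
  have proj_sum : ∑ j : Fin r, ⟪e j, u⟫ = ‖v‖ := by
    rw [← sum_inner, tele, hu_def, real_inner_smul_right, real_inner_self_eq_norm_sq]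
    have : ‖v‖ ≠ 0 := norm_ne_zero_iff.mpr hv
    field_simp
  -- each term nonneg
  have term_nonneg : ∀ j : Fin r, 0 ≤ ‖e j‖ - ⟪e j, u⟫ := by
    intro j
    have h := real_inner_le_norm (e j) u
    rw [hu1, mul_one] at h
    linarith
  -- excess identity
  have excess_eq : ∑ j : Fin r, (‖e j‖ - ⟪e j, u⟫)
      = (∑ j : Fin r, ‖e j‖) - ‖v‖ := by
    rw [Finset.sum_sub_distrib, proj_sum]
  set F := Finset.univ.filter
      (fun j : Fin r => γ < InnerProductGeometry.angle (e j) u) with hF_def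
  -- per-edge bound on filtered set
  have per_edge : ∀ j ∈ F, 11 * γ ^ 2 / 24 * ‖e j‖ ≤ ‖e j‖ - ⟪e j, u⟫ := by
    intro j hj
    rw [hF_def, Finset.mem_filter] at hj
    have hθ : γ < InnerProductGeometry.angle (e j) u := hj.2
    have hθπ : InnerProductGeometry.angle (e j) u ≤ Real.pi :=
      InnerProductGeometry.angle_le_pi _ _
    have hcosle : Real.cos (InnerProductGeometry.angle (e j) u) ≤ Real.cos γ :=
      Real.cos_le_cos_of_nonneg_of_le_pi hγ0.le hθπ hθ.le
    have hkey := cos_le_key hγ0 hγ1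
    have hinner : ⟪e j, u⟫
        = Real.cos (InnerProductGeometry.angle (e j) u) * (‖e j‖ * ‖u‖) :=
      (InnerProductGeometry.cos_angle_mul_norm_mul_norm _ _).symm
    rw [hinner, hu1]
    have hn : (0:ℝ) ≤ ‖e j‖ := norm_nonneg _
    nlinarith [mul_le_mul_of_nonneg_right (hcosle.trans hkey) hn]
  -- assemble
  have step1 : 11 * γ ^ 2 / 24 * ∑ j ∈ F, ‖e j‖ ≤ (∑ j : Fin r, ‖e j‖) - ‖v‖ := by
    rw [Finset.mul_sum]
    calc ∑ j ∈ F, 11 * γ ^ 2 / 24 * ‖e j‖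
        ≤ ∑ j ∈ F, (‖e j‖ - ⟪e j, u⟫) := Finset.sum_le_sum per_edge
      _ ≤ ∑ j : Fin r, (‖e j‖ - ⟪e j, u⟫) :=
          Finset.sum_le_sum_of_subset_of_nonneg (Finset.filter_subset _ _)
            (fun j _ _ => term_nonneg j)
      _ = (∑ j : Fin r, ‖e j‖) - ‖v‖ := excess_eq
  have hc : (0:ℝ) < 11 * γ ^ 2 := by positivity
  calc ∑ j ∈ F, ‖e j‖
      = 24 / (11 * γ ^ 2) * (11 * γ ^ 2 / 24 * ∑ j ∈ F, ‖e j‖) := by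
        field_simp
    _ ≤ 24 / (11 * γ ^ 2) * ((∑ j : Fin r, ‖e j‖) - ‖v‖) := by
        apply mul_le_mul_of_nonneg_left step1 (by positivity)
end

section
/- (Common-direction lemma) For any unit vectors v₁,...,v_m in ℝ^d with d ≤ m, there exist signs σ₁,...,σ_m ∈ {−1, +1} and a unit vector x ∈ ℝ^d such that ⟨x, σᵢvᵢ⟩ ≥ 1/(8m^{3/2}) for all i ∈ [m]. -/
/-- Common-direction lemma: for unit vectors `v₁,…,v_m` in `ℝ^d` with `d ≤ m`,
there are signs `σᵢ ∈ {−1,+1}` and a unit vector `x` with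
`⟪x, σᵢ vᵢ⟫ ≥ 1/(8 m^{3/2})` for all `i`. -/
theorem common_direction (d m : ℕ) (hd : 0 < d) (hdm : d ≤ m)
    (v : Fin m → EuclideanSpace ℝ (Fin d)) (hv : ∀ i, ‖v i‖ = 1) :
    ∃ (σ : Fin m → ℝ) (x : EuclideanSpace ℝ (Fin d)),
      (∀ i, σ i = 1 ∨ σ i = -1) ∧ ‖x‖ = 1 ∧
      ∀ i, (1 : ℝ) / (8 * m * Real.sqrt m) ≤ (inner ℝ x (σ i • v i) : ℝ) := by
  have hm : 0 < m := lt_of_lt_of_le hd hdm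
  obtain ⟨σb, -, hmax⟩ := Finset.exists_max_image (Finset.univ : Finset (Fin m → Bool))
      (fun τ => ‖∑ j, (if τ j then (1:ℝ) else -1) • v j‖) ⟨fun _ => true, Finset.mem_univ _⟩
  set σ : Fin m → ℝ := fun i => if σb i then (1:ℝ) else -1 with hσ
  have hσpm : ∀ i, σ i = 1 ∨ σ i = -1 := by
    intro i; by_cases h : σb i <;> simp [hσ, h]
  have hσsq : ∀ i, σ i * σ i = 1 := by
    intro i; rcases hσpm i with h | h <;> rw [h] <;> norm_num
  set s : EuclideanSpace ℝ (Fin d) := ∑ j, σ j • v j with hs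
  -- key: σ i * ⟪s, v i⟫ ≥ 1
  have key : ∀ i, (1:ℝ) ≤ σ i * inner ℝ s (v i) := by
    intro i
    set τb := Function.update σb i (!σb i) with hτb
    set τ : Fin m → ℝ := fun j => if τb j then (1:ℝ) else -1 with hτ
    have hdiff : ∀ j, (σ j - τ j) • v j
        = if j = i then (2 * σ i) • v i else 0 := by
      intro j
      by_cases hj : j = i
      · subst hj
        have hti : τ j = -σ j := by
          by_cases h : σb j <;> simp [hτ, hτb, hσ, h]
        rw [hti, if_pos rfl]
        congr 1
        ring
      · have hti : τ j = σ j := by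
          simp [hτ, hτb, Function.update_of_ne hj, hσ]
        simp [hti, hj]
    have hsum : (∑ j, τ j • v j) = s - (2 * σ i) • v i := by
      have hsub : s - (∑ j, τ j • v j) = (2 * σ i) • v i := by
        rw [hs, ← Finset.sum_sub_distrib]
        simp_rw [← sub_smul]
        rw [Finset.sum_congr rfl (fun j _ => hdiff j)]
        simp
      rw [← hsub]
      abel
    have hle : ‖s - (2 * σ i) • v i‖ ≤ ‖s‖ := by
      have h2 : ‖∑ j, τ j • v j‖ ≤ ‖s‖ := hmax τb (Finset.mem_univ _)
      rwa [hsum] at h2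
    have hsq : ‖s - (2 * σ i) • v i‖ ^ 2 ≤ ‖s‖ ^ 2 :=
      pow_le_pow_left₀ (norm_nonneg _) hle 2
    rw [@norm_sub_sq_real] at hsq
    have hin : (inner ℝ s ((2 * σ i) • v i) : ℝ) = (2 * σ i) * inner ℝ s (v i) :=
      real_inner_smul_right _ _ _
    have hnw : ‖(2 * σ i) • v i‖ ^ 2 = 4 := by
      rw [norm_smul, hv i, mul_one, Real.norm_eq_abs]
      rcases hσpm i with h | h <;> rw [h] <;> norm_num
    rw [hin, hnw] at hsq
    nlinarith [hsq]
  -- s ≠ 0 and norm bounds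
  have i0 : Fin m := ⟨0, hm⟩
  have hs0 : s ≠ 0 := by
    intro h
    have := key i0
    rw [h] at this
    simp [inner_zero_left] at this
    linarith
  have hspos : 0 < ‖s‖ := norm_pos_iff.mpr hs0
  have hsm : ‖s‖ ≤ (m : ℝ) := by
    calc ‖s‖ ≤ ∑ j, ‖σ j • v j‖ := norm_sum_le _ _
    _ = ∑ j : Fin m, (1:ℝ) := by
        refine Finset.sum_congr rfl (fun j _ => ?_)
        rw [norm_smul, hv j, mul_one, Real.norm_eq_abs]
        rcases hσpm j with h | h <;> rw [h] <;> norm_num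
    _ = (m : ℝ) := by simp
  refine ⟨σ, ‖s‖⁻¹ • s, hσpm, ?_, ?_⟩
  · rw [norm_smul, Real.norm_eq_abs, abs_inv, abs_norm, inv_mul_cancel₀ (ne_of_gt hspos)]
  · intro i
    have hinner : (inner ℝ (‖s‖⁻¹ • s) (σ i • v i) : ℝ)
        = ‖s‖⁻¹ * (σ i * inner ℝ s (v i)) := by
      rw [real_inner_smul_left, real_inner_smul_right]
    rw [hinner]
    have h1 : (1:ℝ)/(8 * m * Real.sqrt m) ≤ 1/(m:ℝ) := by
      have hmr : (1:ℝ) ≤ (m:ℝ) := by exact_mod_cast hm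
      have hsqrt : (1:ℝ) ≤ Real.sqrt m := Real.one_le_sqrt.mpr hmr
      rw [div_le_div_iff₀ (by positivity) (by exact_mod_cast hm)]
      nlinarith
    have h2 : (1:ℝ)/(m:ℝ) ≤ ‖s‖⁻¹ := by
      rw [one_div]
      exact inv_anti₀ hspos hsm
    have h3 : ‖s‖⁻¹ ≤ ‖s‖⁻¹ * (σ i * inner ℝ s (v i)) :=
      le_mul_of_one_le_right (by positivity) (key i)
    linarith
end

section
/- Let π be a path in ℝ^d contained (in x-coordinate) in a slab [a, b] ⊆ ℝ, i.e. every point q of π has q[0] ∈ [a,b]. Suppose each edge of π either has angle at most π/2 − 1/(2m') with the x-axis (making x-progress at least ‖e‖/(3m') by the sine bound, for m' ≥ 1) or is backward-facing. Then the total length of the well-aligned forward edges satisfies (1/(3m'))·Σ_{aligned e} ‖e‖ ≤ (b − a) + Σ_{backward e} ‖e‖. -/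
lemma fin_telescope {r : ℕ} (g : Fin (r + 1) → ℝ) :
    ∑ j : Fin r, (g j.succ - g j.castSucc) = g (Fin.last r) - g 0 := by
  set G : ℕ → ℝ := fun n => g ⟨min n r, by omega⟩ with hG
  have h1 : ∑ j : Fin r, (g j.succ - g j.castSucc) = ∑ n ∈ Finset.range r, (G (n+1) - G n) := by
    rw [← Fin.sum_univ_eq_sum_range]
    apply Finset.sum_congr rfl
    intro j _
    have hj := j.isLt
    congr 1
    · congr 1; exact (Fin.ext (by simp [Fin.val_succ]))
    · congr 1; exact (Fin.ext (by simp))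
  rw [h1, Finset.sum_range_sub]
  congr 1
  · simp only [hG]; congr 1; exact Fin.ext (by simp [Fin.last])

lemma coord_le_norm {d : ℕ} (hd : 0 < d) (v : EuclideanSpace ℝ (Fin d)) :
    |v ⟨0, hd⟩| ≤ ‖v‖ := by
  rw [EuclideanSpace.norm_eq, ← Real.sqrt_sq_eq_abs]
  apply Real.sqrt_le_sqrt
  calc (v ⟨0, hd⟩) ^ 2 = ‖v ⟨0, hd⟩‖ ^ 2 := by rw [Real.norm_eq_abs, sq_abs]
    _ ≤ ∑ i, ‖v i‖ ^ 2 :=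
      Finset.single_le_sum (f := fun i => ‖v i‖ ^ 2) (fun i _ => sq_nonneg _)
        (Finset.mem_univ _)

/-- Slab progress bound: if every point of a path lies (in x-coordinate) in
`[a,b]` and every edge is either aligned (x-progress at least `‖e‖/(3m')`) or
backward-facing (negative x-progress), then
`(1/(3m'))·Σ_{aligned} ‖e‖ ≤ (b − a) + Σ_{backward} ‖e‖`. -/
theorem slab_progress (d r : ℕ) (hd : 0 < d)
    (q : Fin (r + 1) → EuclideanSpace ℝ (Fin d))
    (a b : ℝ) (m' : ℝ) (hm' : 1 ≤ m')
    (hin : ∀ i : Fin (r + 1), q i ⟨0, hd⟩ ∈ Set.Icc a b)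
    (hsplit : ∀ j : Fin r,
      ‖q j.succ - q j.castSucc‖ / (3 * m') ≤
          q j.succ ⟨0, hd⟩ - q j.castSucc ⟨0, hd⟩ ∨
        q j.succ ⟨0, hd⟩ - q j.castSucc ⟨0, hd⟩ < 0) :
    (1 / (3 * m')) *
        ∑ j ∈ Finset.univ.filter
          (fun j : Fin r => ‖q j.succ - q j.castSucc‖ / (3 * m') ≤
            q j.succ ⟨0, hd⟩ - q j.castSucc ⟨0, hd⟩),
          ‖q j.succ - q j.castSucc‖ ≤
      (b - a) +
        ∑ j ∈ Finset.univ.filter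
          (fun j : Fin r => q j.succ ⟨0, hd⟩ - q j.castSucc ⟨0, hd⟩ < 0),
          ‖q j.succ - q j.castSucc‖ := by
  classical
  set f : Fin r → ℝ := fun j => q j.succ ⟨0, hd⟩ - q j.castSucc ⟨0, hd⟩ with hf
  set N : Fin r → ℝ := fun j => ‖q j.succ - q j.castSucc‖ with hN
  set S : Finset (Fin r) := Finset.univ.filter (fun j => N j / (3 * m') ≤ f j) with hS
  set B : Finset (Fin r) := Finset.univ.filter (fun j => f j < 0) with hB
  have h3m : (0:ℝ) < 3 * m' := by linarith
  have h1 : (1 / (3 * m')) * ∑ j ∈ S, N j ≤ ∑ j ∈ S, f j := by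
    rw [Finset.mul_sum]
    apply Finset.sum_le_sum
    intro j hj
    have := (Finset.mem_filter.mp hj).2
    calc 1 / (3 * m') * N j = N j / (3 * m') := by ring
    _ ≤ f j := this
  have h2 : ∑ j ∈ S, f j = ∑ j : Fin r, f j + ∑ j ∈ Sᶜ, (-f j) := by
    rw [Finset.sum_neg_distrib]
    have h := Finset.sum_filter_add_sum_filter_not Finset.univ
      (fun j => N j / (3 * m') ≤ f j) f
    rw [← hS] at h
    have hcompl : Finset.univ.filter (fun j => ¬ (N j / (3 * m') ≤ f j)) = Sᶜ := by
      rw [hS, Finset.compl_filter]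
    rw [hcompl] at h
    linarith
  have h3 : ∑ j : Fin r, f j ≤ b - a := by
    have ht := fin_telescope (fun i => q i ⟨0, hd⟩)
    simp only [hf]
    rw [ht]
    have ha := hin (Fin.last r)
    have hb := hin 0
    simp only [Set.mem_Icc] at ha hb
    linarith [ha.2, hb.1]
  have habs : ∀ j : Fin r, |f j| ≤ N j := by
    intro j
    have := coord_le_norm hd (q j.succ - q j.castSucc)
    simpa [hf, hN, PiLp.sub_apply] using this
  have hsub : Sᶜ ⊆ B := by
    intro j hj
    rw [Finset.mem_compl, hS, Finset.mem_filter] at hj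
    push_neg at hj
    have hneg : f j < 0 := by
      refine (hsplit j).resolve_left ?_
      simp only [not_le]
      exact hj (Finset.mem_univ j)
    rw [hB, Finset.mem_filter]
    exact ⟨Finset.mem_univ j, hneg⟩
  have h4 : ∑ j ∈ Sᶜ, (-f j) ≤ ∑ j ∈ B, N j := by
    calc ∑ j ∈ Sᶜ, (-f j) ≤ ∑ j ∈ Sᶜ, N j := by
          apply Finset.sum_le_sum
          intro j _
          have := habs j
          have := neg_abs_le (f j)
          linarith
      _ ≤ ∑ j ∈ B, N j := by
          apply Finset.sum_le_sum_of_subset_of_nonneg hsub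
          intro j _ _
          exact norm_nonneg _
  calc (1 / (3 * m')) * ∑ j ∈ S, N j ≤ ∑ j ∈ S, f j := h1
    _ = ∑ j : Fin r, f j + ∑ j ∈ Sᶜ, (-f j) := h2
    _ ≤ (b - a) + ∑ j ∈ B, N j := by linarith
end
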